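/- Let H be a subgroup of F containing a normal subgroup N of F, let h ∈ N with h ≠ 1, and let m = l(h). Then for every Schreier transversal T of H and every i ≥ 0: Γ_T(i) ≤ m · r_T(i+m), where r_T(j) = 1 + (n−1)·Γ_T(j) − γ_T(j+1)/2. -/

import Mathlib

open FreeGroup

namespace SchreierAux

variable {α : Type*} [DecidableEq α]

/-- no-cancellation relation between adjacent letters -/
def NC (a b : α × Bool) : Prop := ¬(a.1 = b.1 ∧ a.2 = !b.2)

lemma reduce_eq_of_chain' {L : List (α × Bool)} (h : List.Chain' NC L) :
    FreeGroup.reduce L = L := by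
  induction L with
  | nil => rfl
  | cons a L ih =>
    rw [FreeGroup.reduce.cons, ih h.tail]
    cases L with
    | nil => rfl
    | cons b L' =>
      have hab : NC a b := (List.isChain_cons_cons.1 h).1
      simp only [List.casesOn]
      rw [if_neg hab]

lemma chain'_of_reduce_eq {L : List (α × Bool)} (h : FreeGroup.reduce L = L) :
    List.Chain' NC L := by
  refine (List.isChain_iff_getElem (R := NC)).2 ?_
  intro i hi
  by_contra hc
  have hc' : (L.get ⟨i, by omega⟩).1 = (L.get ⟨i+1, by omega⟩).1 ∧
      (L.get ⟨i, by omega⟩).2 = !(L.get ⟨i+1, by omega⟩).2 := by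
    by_contra hcc; exact hc hcc
  have hi1 : i < L.length := by omega
  have hi2 : i + 1 < L.length := by omega
  set p := L.get ⟨i, hi1⟩ with hp
  set q := L.get ⟨i+1, hi2⟩ with hq
  have hdecomp : L = L.take i ++ p :: q :: L.drop (i+2) := by
    conv_lhs => rw [← List.take_append_drop i L]
    congr 1
    rw [List.drop_eq_getElem_cons (by omega)]
    congr 1
    rw [List.drop_eq_getElem_cons (by omega)]
    rfl
  have hpq : p = (q.1, !q.2) := by
    rcases hc' with ⟨h1, h2⟩
    exact Prod.ext h1 h2
  have hstep : FreeGroup.Red.Step L (L.take i ++ L.drop (i+2)) := by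
    conv_lhs => rw [hdecomp]
    rw [hpq]
    cases' q with a b
    exact FreeGroup.Red.Step.not_rev
  have heq := FreeGroup.reduce.Step.eq hstep
  rw [h] at heq
  have hred : FreeGroup.Red (L.take i ++ L.drop (i+2)) (FreeGroup.reduce (L.take i ++ L.drop (i+2))) := FreeGroup.reduce.red
  rw [← heq] at hred
  have hlen := FreeGroup.Red.length_le hred
  have : (L.take i ++ L.drop (i+2)).length + 2 = L.length := by
    simp only [List.length_append, List.length_take, List.length_drop]
    omega
  omega

lemma chain'_toWord (x : FreeGroup α) : List.Chain' NC x.toWord :=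
  chain'_of_reduce_eq (FreeGroup.reduce_toWord x)

lemma toWord_mk_of_chain' {L : List (α × Bool)} (h : List.Chain' NC L) :
    (FreeGroup.mk L).toWord = L := by
  rw [FreeGroup.toWord_mk, reduce_eq_of_chain' h]

lemma toWord_mk_take (x : FreeGroup α) (k : ℕ) :
    (FreeGroup.mk (x.toWord.take k)).toWord = x.toWord.take k :=
  toWord_mk_of_chain' ((chain'_toWord x).take k)

lemma mk_nil_eq_one : (FreeGroup.mk ([] : List (α × Bool))) = 1 := by
  rw [← FreeGroup.toWord_one (α := α), FreeGroup.mk_toWord]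

lemma mul_letter (v : FreeGroup α) (x : α × Bool) :
    v * FreeGroup.mk [x] = FreeGroup.mk (v.toWord ++ [x]) := by
  conv_lhs => rw [← FreeGroup.mk_toWord (x := v)]
  rw [FreeGroup.mul_mk]

lemma mk_append_cancel (A : List (α × Bool)) (x : α × Bool) :
    FreeGroup.mk (A ++ [(x.1, !x.2), x]) = FreeGroup.mk A := by
  have hstep : FreeGroup.Red.Step (A ++ (x.1, !x.2) :: x :: []) (A ++ []) := by
    cases' x with a b
    exact FreeGroup.Red.Step.not_rev
  have this : (FreeGroup.mk (A ++ [(x.1, !x.2), x]) : FreeGroup α) = FreeGroup.mk (A ++ []) := Quot.sound hstep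
  simpa [FreeGroup.quot_mk_eq_mk] using this

end SchreierAux
namespace SchreierAux2

variable {α : Type*} [DecidableEq α]

lemma ball_finite [Finite α] (T : Set (FreeGroup α)) (j : ℕ) :
    {t ∈ T | FreeGroup.norm t ≤ j}.Finite := by
  have h1 : {l : List (α × Bool) | l.length ≤ j}.Finite := List.finite_length_le _ j
  have h2 : (FreeGroup.toWord ⁻¹' {l : List (α × Bool) | l.length ≤ j}).Finite :=
    h1.preimage (FreeGroup.toWord_injective.injOn)
  exact h2.subset (fun x hx => hx.2)

lemma rep_unique {H : Subgroup (FreeGroup α)} {T : Set (FreeGroup α)}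
    (hT : ∀ g : FreeGroup α, ∃! t, t ∈ T ∧ g * t⁻¹ ∈ H)
    {a b : FreeGroup α} (ha : a ∈ T) (hb : b ∈ T) (hab : a * b⁻¹ ∈ H) : a = b := by
  obtain ⟨t, _, ht⟩ := hT a
  have h1 : a = t := ht a ⟨ha, by simpa using one_mem H⟩
  have h2 : b = t := ht b ⟨hb, hab⟩
  exact h1.trans h2.symm

lemma one_mem_T {H : Subgroup (FreeGroup α)} {T : Set (FreeGroup α)}
    (hT : ∀ g : FreeGroup α, ∃! t, t ∈ T ∧ g * t⁻¹ ∈ H)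
    (hT2 : ∀ t ∈ T, ∀ k : ℕ, FreeGroup.mk ((FreeGroup.toWord t).take k) ∈ T) :
    (1 : FreeGroup α) ∈ T := by
  obtain ⟨t, ⟨htT, -⟩, -⟩ := hT 1
  have := hT2 t htT 0
  simpa [List.take_zero, SchreierAux.mk_nil_eq_one] using this

lemma falloff {H N : Subgroup (FreeGroup α)} (hN : N.Normal) (hNH : N ≤ H)
    {T : Set (FreeGroup α)}
    (hT : ∀ g : FreeGroup α, ∃! t, t ∈ T ∧ g * t⁻¹ ∈ H)
    {t : FreeGroup α} (ht : t ∈ T) {w : List (α × Bool)}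
    (hw : FreeGroup.mk w ∈ N) (hw1 : FreeGroup.mk w ≠ 1) :
    ∃ k, k < w.length ∧ t * FreeGroup.mk (w.take k) ∈ T ∧
      t * FreeGroup.mk (w.take (k+1)) ∉ T := by
  have hwne : w ≠ [] := by
    rintro rfl; exact hw1 SchreierAux.mk_nil_eq_one
  have hm : t * FreeGroup.mk w ∉ T := by
    intro hmem
    have hconj : (t * FreeGroup.mk w) * t⁻¹ ∈ H := by
      apply hNH
      have := hN.conj_mem _ hw t
      simpa [mul_assoc] using this
    have heqt := rep_unique hT hmem ht hconj
    apply hw1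
    exact mul_left_cancel (a := t) (by rw [mul_one]; exact heqt)
  classical
  have hex : ∃ j, t * FreeGroup.mk (w.take (j+1)) ∉ T := by
    refine ⟨w.length - 1, ?_⟩
    have hl : w.length - 1 + 1 = w.length :=
      Nat.succ_pred_eq_of_pos (List.length_pos_iff.2 hwne)
    rw [hl, List.take_length]
    exact hm
  refine ⟨Nat.find hex, ?_, ?_, Nat.find_spec hex⟩
  · have hle : Nat.find hex ≤ w.length - 1 := Nat.find_le (by
      have hl : w.length - 1 + 1 = w.length :=
        Nat.succ_pred_eq_of_pos (List.length_pos_iff.2 hwne)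
      rw [hl, List.take_length]; exact hm)
    have : 0 < w.length := List.length_pos_iff.2 hwne
    omega
  · rcases Nat.eq_zero_or_pos (Nat.find hex) with h0 | hpos
    · rw [h0]
      simp only [List.take_zero, SchreierAux.mk_nil_eq_one, mul_one]
      exact ht
    · have hmin := Nat.find_min hex (m := Nat.find hex - 1) (by omega)
      have hmem : t * FreeGroup.mk (w.take (Nat.find hex - 1 + 1)) ∈ T := by
        by_contra hcc; exact hmin hcc
      have harith : Nat.find hex - 1 + 1 = Nat.find hex := by omega
      rwa [harith] at hmem

lemma take_succ_mul (w : List (α × Bool)) {k : ℕ} (hk : k < w.length) (d : α × Bool) :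
    FreeGroup.mk (w.take (k+1)) = FreeGroup.mk (w.take k) * FreeGroup.mk [w.getD k d] := by
  rw [FreeGroup.mul_mk, List.getD_eq_getElem w d hk, List.take_concat_get' w k hk]

lemma invRev_getD (w : List (α × Bool)) {k : ℕ} (hk : k < w.length) (d : α × Bool) :
    (FreeGroup.invRev w).getD k d =
      ((w.getD (w.length - 1 - k) d).1, !(w.getD (w.length - 1 - k) d).2) := by
  have hk' : k < (FreeGroup.invRev w).length := by rwa [FreeGroup.invRev_length]
  have hj : w.length - 1 - k < w.length := by omega
  rw [List.getD_eq_getElem _ d hk', List.getD_eq_getElem w d hj]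
  simp [FreeGroup.invRev, List.getElem_reverse]

end SchreierAux2
/-- A Schreier transversal for a subgroup `H` of the free group on `Fin n`:
a set of representatives, exactly one for each right coset `Hg`, closed under
taking initial segments (prefixes) of reduced words. -/
def IsSchreierTransversal {n : ℕ} (H : Subgroup (FreeGroup (Fin n)))
    (T : Set (FreeGroup (Fin n))) : Prop :=
  (∀ g : FreeGroup (Fin n), ∃! t, t ∈ T ∧ g * t⁻¹ ∈ H) ∧
  (∀ t ∈ T, ∀ k : ℕ, FreeGroup.mk ((FreeGroup.toWord t).take k) ∈ T)

/-- `Γ_T(i)`, the number of elements of the transversal `T` of length at most `i`. -/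
noncomputable def GammaT {n : ℕ} (T : Set (FreeGroup (Fin n))) (i : ℕ) : ℕ :=
  Set.ncard {t ∈ T | FreeGroup.norm t ≤ i}

/-- `γ_T(i)`, the number of elements of the transversal `T` of length exactly `i`. -/
noncomputable def gammaT {n : ℕ} (T : Set (FreeGroup (Fin n))) (i : ℕ) : ℕ :=
  Set.ncard {t ∈ T | FreeGroup.norm t = i}

/-- `r_T(i) = 1 + (n−1)·Γ_T(i) − γ_T(i+1)/2`. -/
noncomputable def rT (n : ℕ) (T : Set (FreeGroup (Fin n))) (i : ℕ) : ℚ :=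
  1 + ((n : ℚ) - 1) * (GammaT T i : ℚ) - (gammaT T (i + 1) : ℚ) / 2


namespace SchreierAux3
open FreeGroup

variable {α : Type*} [DecidableEq α]

lemma Gamma_succ [Finite α] (T : Set (FreeGroup α)) (j : ℕ) :
    {t ∈ T | FreeGroup.norm t ≤ j + 1}.ncard
      = {t ∈ T | FreeGroup.norm t ≤ j}.ncard + {t ∈ T | FreeGroup.norm t = j + 1}.ncard := by
  have hset : {t ∈ T | FreeGroup.norm t ≤ j + 1}
      = {t ∈ T | FreeGroup.norm t ≤ j} ∪ {t ∈ T | FreeGroup.norm t = j + 1} := by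
    ext x
    simp only [Set.mem_setOf_eq, Set.mem_union]
    constructor
    · rintro ⟨hx, hle⟩
      rcases Nat.lt_or_ge (FreeGroup.norm x) (j+1) with hlt | hge
      · exact Or.inl ⟨hx, by omega⟩
      · exact Or.inr ⟨hx, by omega⟩
    · rintro (⟨hx, hle⟩ | ⟨hx, heq⟩)
      · exact ⟨hx, by omega⟩
      · exact ⟨hx, by omega⟩
  rw [hset]
  apply Set.ncard_union_eq
  · rw [Set.disjoint_left]
    rintro x ⟨-, hle⟩ ⟨-, heq⟩
    omega
  · exact SchreierAux2.ball_finite T j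
  · exact (SchreierAux2.ball_finite T (j+1)).subset (by rintro x ⟨hx, hx2⟩; exact ⟨hx, by omega⟩)

/-- the cancellation direction lands on the parent, which is in T -/
lemma cancel_mem_T {T : Set (FreeGroup α)}
    (hT2 : ∀ t ∈ T, ∀ k : ℕ, FreeGroup.mk ((FreeGroup.toWord t).take k) ∈ T)
    {v : FreeGroup α} (hv : v ∈ T) {x : α × Bool}
    (hx : v.toWord.getLast? = some (x.1, !x.2)) :
    v * FreeGroup.mk [x] ∈ T := by
  have hdrop : v.toWord.dropLast ++ [(x.1, !x.2)] = v.toWord :=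
    List.dropLast_append_getLast? _ hx
  have hmul : v * FreeGroup.mk [x] = FreeGroup.mk (v.toWord.dropLast) := by
    conv_lhs => rw [SchreierAux.mul_letter, ← hdrop, List.append_assoc]
    exact SchreierAux.mk_append_cancel _ x
  rw [hmul, List.dropLast_eq_take]
  exact hT2 v hv _

end SchreierAux3

/-- If `H` contains a normal subgroup `N` of `F` and `1 ≠ h ∈ N` has length `m`,
then `Γ_T(i) ≤ m · r_T(i+m)` for every Schreier transversal `T` of `H`. -/
theorem gammaT_le_mul_rT {n : ℕ} (hn : 1 ≤ n)
    (H N : Subgroup (FreeGroup (Fin n))) (hN : N.Normal) (hNH : N ≤ H)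
    (h : FreeGroup (Fin n)) (hhN : h ∈ N) (hh1 : h ≠ 1)
    (T : Set (FreeGroup (Fin n))) (hT : IsSchreierTransversal H T) (i : ℕ) :
    (GammaT T i : ℚ) ≤ (FreeGroup.norm h : ℚ) * rT n T (i + FreeGroup.norm h) := by
  classical
  obtain ⟨hT1, hT2⟩ := hT
  set m := FreeGroup.norm h with hm
  have hm1 : 1 ≤ m := by
    rcases Nat.eq_zero_or_pos m with h0 | hp
    · exact absurd (FreeGroup.norm_eq_zero.1 h0) hh1
    · exact hp
  set J := i + m with hJ
  have h1T : (1 : FreeGroup (Fin n)) ∈ T := SchreierAux2.one_mem_T hT1 hT2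
  -- finsets
  have hfinJ := SchreierAux2.ball_finite T J
  have hfinJ1 := SchreierAux2.ball_finite T (J+1)
  have hfini := SchreierAux2.ball_finite T i
  set S : Finset (FreeGroup (Fin n)) := hfinJ.toFinset with hS
  set S' : Finset (FreeGroup (Fin n)) := hfinJ1.toFinset with hS'
  set Si : Finset (FreeGroup (Fin n)) := hfini.toFinset with hSi
  have hmemS : ∀ x, x ∈ S ↔ x ∈ T ∧ FreeGroup.norm x ≤ J := by
    intro x; rw [hS, Set.Finite.mem_toFinset]; rfl
  have hmemS' : ∀ x, x ∈ S' ↔ x ∈ T ∧ FreeGroup.norm x ≤ J + 1 := by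
    intro x; rw [hS', Set.Finite.mem_toFinset]; rfl
  have hmemSi : ∀ x, x ∈ Si ↔ x ∈ T ∧ FreeGroup.norm x ≤ i := by
    intro x; rw [hSi, Set.Finite.mem_toFinset]; rfl
  have hcardS : S.card = GammaT T J := (Set.ncard_eq_toFinset_card _ hfinJ).symm
  have hcardSi : Si.card = GammaT T i := (Set.ncard_eq_toFinset_card _ hfini).symm
  have hcardS' : S'.card = GammaT T J + gammaT T (J+1) := by
    rw [hS', ← Set.ncard_eq_toFinset_card _ hfinJ1]
    exact SchreierAux3.Gamma_succ T J
  have h1S : (1 : FreeGroup (Fin n)) ∈ S := (hmemS 1).2 ⟨h1T, by simp [FreeGroup.norm_one]⟩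
  have h1S' : (1 : FreeGroup (Fin n)) ∈ S' := (hmemS' 1).2 ⟨h1T, by simp [FreeGroup.norm_one]⟩
  set d0 : Fin n × Bool := (⟨0, hn⟩, true) with hd0
  -- the three finsets of directions
  set E : Finset (FreeGroup (Fin n) × (Fin n × Bool)) :=
    (S ×ˢ Finset.univ).filter (fun p => p.1 * FreeGroup.mk [p.2] ∉ T) with hE
  set P : Finset (FreeGroup (Fin n) × (Fin n × Bool)) :=
    (S ×ˢ Finset.univ).filter
      (fun p => p.1.toWord.getLast? = some (p.2.1, !p.2.2)) with hP
  set C : Finset (FreeGroup (Fin n) × (Fin n × Bool)) :=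
    (S ×ˢ Finset.univ).filter
      (fun p => p.1 * FreeGroup.mk [p.2] ∈ T
        ∧ ¬(p.1.toWord.getLast? = some (p.2.1, !p.2.2))) with hC
  -- disjointness and union bound
  have hdisjEP : Disjoint E P := by
    rw [hE, hP, Finset.disjoint_filter]
    intro p hp hnot hlast
    exact hnot (SchreierAux3.cancel_mem_T hT2 ((hmemS p.1).1 (Finset.mem_product.1 hp).1).1 hlast)
  have hdisjEC : Disjoint E C := by
    rw [hE, hC, Finset.disjoint_filter]
    intro p hp hnot hc
    exact hnot hc.1
  have hdisjPC : Disjoint P C := by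
    rw [hP, hC, Finset.disjoint_filter]
    intro p hp hlast hc
    exact hc.2 hlast
  have hcardsum : E.card + P.card + C.card ≤ S.card * (n * 2) := by
    have hsub : E ∪ P ∪ C ⊆ S ×ˢ Finset.univ := by
      apply Finset.union_subset (Finset.union_subset ?_ ?_) ?_ <;>
        simp [hE, hP, hC, Finset.filter_subset]
    have hc1 : (E ∪ P ∪ C).card = E.card + P.card + C.card := by
      rw [Finset.card_union_of_disjoint, Finset.card_union_of_disjoint hdisjEP]
      rw [Finset.disjoint_union_left]
      exact ⟨hdisjEC, hdisjPC⟩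
    calc E.card + P.card + C.card = (E ∪ P ∪ C).card := hc1.symm
      _ ≤ (S ×ˢ (Finset.univ : Finset (Fin n × Bool))).card := Finset.card_le_card hsub
      _ = S.card * (n * 2) := by
          rw [Finset.card_product, Finset.card_univ, Fintype.card_prod,
            Fintype.card_fin, Fintype.card_bool]
  have hnorm_toWord : ∀ x : FreeGroup (Fin n), FreeGroup.norm x = x.toWord.length :=
    fun _ => rfl
  have hne_one : ∀ v : FreeGroup (Fin n), v ≠ 1 → ∃ y, v.toWord.getLast? = some y := by
    intro v hv1
    have hvne : v.toWord ≠ [] := by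
      intro hc
      exact hv1 (by rw [← FreeGroup.mk_toWord (x := v), hc, SchreierAux.mk_nil_eq_one])
    cases hgl : v.toWord.getLast? with
    | none => exact absurd (List.getLast?_eq_none_iff.1 hgl) hvne
    | some y => exact ⟨y, rfl⟩
  -- lower bound for P
  have hPcard : S.card ≤ P.card + 1 := by
    set fP : FreeGroup (Fin n) → FreeGroup (Fin n) × (Fin n × Bool) :=
      fun v => match v.toWord.getLast? with
        | some y => (v, (y.1, !y.2))
        | none => (v, d0) with hfP
    have hfst : ∀ v, (fP v).1 = v := by
      intro v
      cases hgl : v.toWord.getLast? <;> simp [hfP, hgl]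
    have hmaps : ∀ v ∈ S.erase 1, fP v ∈ P := by
      intro v hv
      obtain ⟨hv1, hvS⟩ := Finset.mem_erase.1 hv
      obtain ⟨y, hy⟩ := hne_one v hv1
      have hfPv : fP v = (v, (y.1, !y.2)) := by simp [hfP, hy]
      rw [hP, Finset.mem_filter, hfPv]
      refine ⟨Finset.mem_product.2 ⟨hvS, Finset.mem_univ _⟩, ?_⟩
      simpa [Bool.not_not] using hy
    have hinj : Set.InjOn fP (S.erase 1 : Finset (FreeGroup (Fin n))) := by
      intro a _ b _ hab
      rw [← hfst a, ← hfst b, hab]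
    have := Finset.card_le_card_of_injOn fP hmaps hinj
    rw [Finset.card_erase_of_mem h1S] at this
    have hS1 : 1 ≤ S.card := Finset.card_pos.2 ⟨1, h1S⟩
    omega
  -- lower bound for C
  have hCcard : S'.card ≤ C.card + 1 := by
    set gC : FreeGroup (Fin n) → FreeGroup (Fin n) × (Fin n × Bool) :=
      fun t => match t.toWord.getLast? with
        | some y => (FreeGroup.mk t.toWord.dropLast, y)
        | none => (1, d0) with hgC
    have hkey : ∀ t ∈ S'.erase 1, gC t ∈ C ∧ (gC t).1 * FreeGroup.mk [(gC t).2] = t := by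
      intro t ht
      obtain ⟨ht1, htS'⟩ := Finset.mem_erase.1 ht
      obtain ⟨htT, htn⟩ := (hmemS' t).1 htS'
      obtain ⟨y, hy⟩ := hne_one t ht1
      have hgCt : gC t = (FreeGroup.mk t.toWord.dropLast, y) := by simp [hgC, hy]
      set v : FreeGroup (Fin n) := FreeGroup.mk t.toWord.dropLast with hv
      have hdrop : t.toWord.dropLast ++ [y] = t.toWord := List.dropLast_append_getLast? _ hy
      have hlenpos : 1 ≤ t.toWord.length := by
        rcases Nat.eq_zero_or_pos t.toWord.length with h0 | hp
        · exact absurd (List.length_eq_zero_iff.1 h0)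
            (fun hc => ht1 (by rw [← FreeGroup.mk_toWord (x := t), hc, SchreierAux.mk_nil_eq_one]))
        · exact hp
      have hvword : v.toWord = t.toWord.dropLast := by
        rw [hv, List.dropLast_eq_take]
        exact SchreierAux.toWord_mk_take t _
      have hvT : v ∈ T := by
        rw [hv, List.dropLast_eq_take]
        exact hT2 t htT _
      have hvnorm : FreeGroup.norm v ≤ J := by
        rw [hnorm_toWord, hvword, List.length_dropLast]
        rw [hnorm_toWord] at htn
        omega
      have hvS : v ∈ S := (hmemS v).2 ⟨hvT, hvnorm⟩
      have hvmul : v * FreeGroup.mk [y] = t := by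
        rw [SchreierAux.mul_letter, hvword, hdrop, FreeGroup.mk_toWord]
      refine ⟨?_, by rw [hgCt]; exact hvmul⟩
      rw [hC, Finset.mem_filter, hgCt]
      refine ⟨Finset.mem_product.2 ⟨hvS, Finset.mem_univ _⟩, ⟨by rw [hvmul]; exact htT, ?_⟩⟩
      -- no cancellation: toWord v cannot end with (y.1, !y.2)
      intro hbad
      have hA : v.toWord.dropLast ++ [(y.1, !y.2)] = v.toWord :=
        List.dropLast_append_getLast? _ hbad
      have hsuffix : [(y.1, !y.2), y] <:+ t.toWord := by
        refine ⟨v.toWord.dropLast, ?_⟩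
        rw [show v.toWord.dropLast ++ [(y.1, !y.2), y]
            = (v.toWord.dropLast ++ [(y.1, !y.2)]) ++ [y] by rw [List.append_assoc]; rfl,
          hA, hvword, hdrop]
      have hchain := (SchreierAux.chain'_toWord t).suffix hsuffix
      have hNC := (List.isChain_cons_cons.1 hchain).1
      exact hNC ⟨rfl, rfl⟩
    have hinj : Set.InjOn gC (S'.erase 1 : Finset (FreeGroup (Fin n))) := by
      intro a ha b hb hab
      have h1 := (hkey a (Finset.mem_coe.1 ha)).2
      have h2 := (hkey b (Finset.mem_coe.1 hb)).2
      rw [← h1, ← h2, hab]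
    have := Finset.card_le_card_of_injOn gC (fun t ht => (hkey t ht).1) hinj
    rw [Finset.card_erase_of_mem h1S'] at this
    have hS1 : 1 ≤ S'.card := Finset.card_pos.2 ⟨1, h1S'⟩
    omega
  -- words for the two reading directions
  have hwprop : ∀ b : Bool,
      FreeGroup.mk (cond b h.toWord h⁻¹.toWord) ∈ N
      ∧ FreeGroup.mk (cond b h.toWord h⁻¹.toWord) ≠ 1
      ∧ (cond b h.toWord h⁻¹.toWord).length = m := by
    intro b
    cases b
    · refine ⟨?_, ?_, ?_⟩
      · rw [cond_false, FreeGroup.mk_toWord]; exact inv_mem hhN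
      · rw [cond_false, FreeGroup.mk_toWord]; simpa using hh1
      · rw [cond_false, ← hnorm_toWord]; exact FreeGroup.norm_inv_eq
    · refine ⟨?_, ?_, ?_⟩
      · rw [cond_true, FreeGroup.mk_toWord]; exact hhN
      · rw [cond_true, FreeGroup.mk_toWord]; exact hh1
      · rw [cond_true, ← hnorm_toWord]
  have hfall : ∀ p : FreeGroup (Fin n) × Bool, p.1 ∈ T →
      ∃ k, k < (cond p.2 h.toWord h⁻¹.toWord).length
        ∧ p.1 * FreeGroup.mk ((cond p.2 h.toWord h⁻¹.toWord).take k) ∈ T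
        ∧ p.1 * FreeGroup.mk ((cond p.2 h.toWord h⁻¹.toWord).take (k+1)) ∉ T :=
    fun p hp => SchreierAux2.falloff hN hNH hT1 hp (hwprop p.2).1 (hwprop p.2).2.1
  set f : FreeGroup (Fin n) × Bool → FreeGroup (Fin n) × (Fin n × Bool) :=
    fun p => if hp : p.1 ∈ T then
        (p.1 * FreeGroup.mk ((cond p.2 h.toWord h⁻¹.toWord).take (hfall p hp).choose),
          (cond p.2 h.toWord h⁻¹.toWord).getD (hfall p hp).choose d0)
      else (1, d0) with hf
  set D : Finset (FreeGroup (Fin n) × Bool) := Si ×ˢ Finset.univ with hD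
  have hfspec : ∀ p : FreeGroup (Fin n) × Bool, ∀ hp : p.1 ∈ T,
      f p = (p.1 * FreeGroup.mk ((cond p.2 h.toWord h⁻¹.toWord).take (hfall p hp).choose),
        (cond p.2 h.toWord h⁻¹.toWord).getD (hfall p hp).choose d0) := by
    intro p hp
    rw [hf]
    simp only [dif_pos hp]
  have hmapsf : ∀ p ∈ D, f p ∈ E := by
    intro p hpD
    rw [hD, Finset.mem_product] at hpD
    obtain ⟨hpT, hpn⟩ := (hmemSi p.1).1 hpD.1
    obtain ⟨hklt, hkin, hknot⟩ := (hfall p hpT).choose_spec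
    have hwlen : (cond p.2 h.toWord h⁻¹.toWord).length = m := (hwprop p.2).2.2
    rw [hE, Finset.mem_filter, hfspec p hpT]
    constructor
    · apply Finset.mem_product.2
      refine ⟨(hmemS _).2 ⟨hkin, ?_⟩, Finset.mem_univ _⟩
      have hb1 := FreeGroup.norm_mul_le p.1
        (FreeGroup.mk ((cond p.2 h.toWord h⁻¹.toWord).take (hfall p hpT).choose))
      have hb2 := FreeGroup.norm_mk_le
        (L₁ := (cond p.2 h.toWord h⁻¹.toWord).take (hfall p hpT).choose)
      have hb3 : ((cond p.2 h.toWord h⁻¹.toWord).take (hfall p hpT).choose).length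
          ≤ (hfall p hpT).choose := by simp [List.length_take]
      have hb4 : (hfall p hpT).choose < m := by rw [← hwlen]; exact hklt
      show FreeGroup.norm (p.1 * FreeGroup.mk
        ((cond p.2 h.toWord h⁻¹.toWord).take (hfall p hpT).choose)) ≤ J
      rw [hJ]
      omega
    · simp only []
      rw [SchreierAux2.take_succ_mul _ hklt d0, ← mul_assoc] at hknot
      exact hknot
  have hfiber : ∀ e ∈ E, (D.filter (fun p => f p = e)).card ≤ m := by
    intro e heE
    set ψ : FreeGroup (Fin n) × Bool → ℕ := fun p =>
      if hp : p.1 ∈ T then (cond p.2 (hfall p hp).choose (m - 1 - (hfall p hp).choose))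
      else 0 with hψ
    have decode : ∀ p ∈ D.filter (fun p => f p = e), ∀ hp : p.1 ∈ T,
        ψ p < m ∧
        h.toWord.getD (ψ p) d0 = (cond p.2 e.2 (e.2.1, !e.2.2)) ∧
        e.1 * (FreeGroup.mk ((cond p.2 h.toWord h⁻¹.toWord).take
          (cond p.2 (ψ p) (m - 1 - ψ p))))⁻¹ = p.1 := by
      intro p hpf hp
      rw [Finset.mem_filter] at hpf
      obtain ⟨hpD, hpe⟩ := hpf
      obtain ⟨p1, pb⟩ := p
      have hmlen : h.toWord.length = m := rfl
      cases pb
      case false =>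
        obtain ⟨hklt, -, -⟩ := (hfall (p1, false) hp).choose_spec
        have hwlen : (cond false h.toWord h⁻¹.toWord).length = m := (hwprop false).2.2
        simp only [cond_false] at hklt hwlen
        have hklt' : (hfall (p1, false) hp).choose < m := by rw [← hwlen]; exact hklt
        have hψp : ψ (p1, false) = m - 1 - (hfall (p1, false) hp).choose := by
          rw [hψ]; simp only [dif_pos hp, cond_false]
        have hfe := (hfspec (p1, false) hp).symm.trans hpe
        have he1 : p1 * FreeGroup.mk (h⁻¹.toWord.take ((hfall (p1, false) hp).choose)) = e.1 :=
          congrArg Prod.fst hfe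
        have he2 : (h⁻¹.toWord).getD ((hfall (p1, false) hp).choose) d0 = e.2 :=
          congrArg Prod.snd hfe
        obtain ⟨k, hklt2, hψp2, he1', he2'⟩ :
            ∃ k, k < m ∧ ψ (p1, false) = m - 1 - k
              ∧ p1 * FreeGroup.mk (h⁻¹.toWord.take k) = e.1
              ∧ (h⁻¹.toWord).getD k d0 = e.2 :=
          ⟨(hfall (p1, false) hp).choose, hklt', hψp, he1, he2⟩
        have hkm : k < h.toWord.length := by rw [hmlen]; exact hklt2
        rw [FreeGroup.toWord_inv, SchreierAux2.invRev_getD h.toWord hkm d0, hmlen] at he2'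
        simp only [cond_false]
        refine ⟨by omega, ?_, ?_⟩
        · rw [hψp2, ← he2']
          simp [Bool.not_not]
        · have hidx : m - 1 - ψ (p1, false) = k := by
            rw [hψp2]; omega
          rw [hidx, mul_inv_eq_iff_eq_mul]
          exact he1'.symm
      case true =>
        obtain ⟨hklt, -, -⟩ := (hfall (p1, true) hp).choose_spec
        have hwlen : (cond true h.toWord h⁻¹.toWord).length = m := (hwprop true).2.2
        simp only [cond_true] at hklt hwlen
        have hklt' : (hfall (p1, true) hp).choose < m := by rw [← hwlen]; exact hklt
        have hψp : ψ (p1, true) = (hfall (p1, true) hp).choose := by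
          rw [hψ]; simp only [dif_pos hp, cond_true]
        have hfe := (hfspec (p1, true) hp).symm.trans hpe
        have he1 : p1 * FreeGroup.mk (h.toWord.take ((hfall (p1, true) hp).choose)) = e.1 :=
          congrArg Prod.fst hfe
        have he2 : h.toWord.getD ((hfall (p1, true) hp).choose) d0 = e.2 :=
          congrArg Prod.snd hfe
        simp only [cond_true]
        refine ⟨by omega, ?_, ?_⟩
        · rw [hψp]; exact he2
        · rw [hψp, mul_inv_eq_iff_eq_mul]
          exact he1.symm
    have hmapsψ : ∀ p ∈ D.filter (fun p => f p = e), ψ p ∈ Finset.range m := by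
      intro p hpf
      have hpD := Finset.mem_filter.1 hpf |>.1
      rw [hD, Finset.mem_product] at hpD
      have hpT := ((hmemSi p.1).1 hpD.1).1
      exact Finset.mem_range.2 (decode p hpf hpT).1
    have hinjψ : Set.InjOn ψ (D.filter (fun p => f p = e) : Finset (FreeGroup (Fin n) × Bool)) := by
      intro p hp' q hq' hpq
      have hpf := Finset.mem_coe.1 hp'
      have hqf := Finset.mem_coe.1 hq'
      have hpD := Finset.mem_filter.1 hpf |>.1
      have hqD := Finset.mem_filter.1 hqf |>.1
      rw [hD, Finset.mem_product] at hpD hqD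
      have hpT := ((hmemSi p.1).1 hpD.1).1
      have hqT := ((hmemSi q.1).1 hqD.1).1
      obtain ⟨hp1, hp2, hp3⟩ := decode p hpf hpT
      obtain ⟨hq1, hq2, hq3⟩ := decode q hqf hqT
      have hbb : p.2 = q.2 := by
        cases hb1 : p.2 <;> cases hb2 : q.2 <;> try rfl
        · rw [hb1] at hp2
          rw [hb2] at hq2
          simp only [cond_false, cond_true] at hp2 hq2
          rw [hpq, hq2] at hp2
          exact absurd (congrArg Prod.snd hp2).symm (by simp)
        · rw [hb1] at hp2
          rw [hb2] at hq2
          simp only [cond_false, cond_true] at hp2 hq2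
          rw [hpq, hq2] at hp2
          exact absurd (congrArg Prod.snd hp2) (by simp)
      rw [hbb, hpq] at hp3
      have h11 : p.1 = q.1 := hp3.symm.trans hq3
      exact Prod.ext h11 hbb
    have hcard := Finset.card_le_card_of_injOn (t := Finset.range m) ψ hmapsψ hinjψ
    simpa using hcard
  have hDbound : D.card ≤ m * E.card :=
    Finset.card_le_mul_card_image_of_maps_to hmapsf m hfiber
  have hDcard : D.card = GammaT T i * 2 := by
    rw [hD, Finset.card_product, Finset.card_univ, Fintype.card_bool, hcardSi]
  -- final arithmetic
  have c1 : (E.card : ℚ) + P.card + C.card ≤ (S.card : ℚ) * (n * 2) := by exact_mod_cast hcardsum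
  have c2 : (S.card : ℚ) ≤ P.card + 1 := by exact_mod_cast hPcard
  have c3 : (S'.card : ℚ) ≤ C.card + 1 := by exact_mod_cast hCcard
  have c4 : (S.card : ℚ) = GammaT T J := by exact_mod_cast hcardS
  have c5 : (S'.card : ℚ) = GammaT T J + gammaT T (J + 1) := by exact_mod_cast hcardS'
  have c6 : (GammaT T i : ℚ) * 2 ≤ (m : ℚ) * E.card := by
    have hb := hDbound
    rw [hDcard] at hb
    exact_mod_cast hb
  have c7 : (1 : ℚ) ≤ (m : ℚ) := by exact_mod_cast hm1
  have hEb : (E.card : ℚ) ≤ 2 + 2 * ((n : ℚ) - 1) * (GammaT T J) - gammaT T (J + 1) := by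
    nlinarith [c1, c2, c3, c4, c5]
  have hmE := mul_le_mul_of_nonneg_left hEb (show (0:ℚ) ≤ (m:ℚ) by positivity)
  rw [rT]
  nlinarith [c6, hmE, c7]
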